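/- If Φ is positive definite on the subspace {v : Pᵀ v = 0} (conditional positive definiteness) and P has full column rank, then the saddle-point matrix [[Φ, P],[Pᵀ, 0]] is invertible. -/
import Mathlib

open Matrix

theorem saddle_invertible_conditional_posdef (n s : ℕ)
    (Φ : Matrix (Fin n) (Fin n) ℝ) (P : Matrix (Fin n) (Fin s) ℝ)
    (hSymm : Φ.IsSymm)
    (hΦ : ∀ v : Fin n → ℝ, v ≠ 0 → Pᵀ *ᵥ v = 0 → 0 < v ⬝ᵥ (Φ *ᵥ v))
    (hP : Function.Injective fun c : Fin s → ℝ => P *ᵥ c) :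
    IsUnit (Matrix.fromBlocks Φ P Pᵀ (0 : Matrix (Fin s) (Fin s) ℝ)) := by
  rw [← Matrix.mulVec_injective_iff_isUnit]
  intro a b hab
  have hx : Matrix.fromBlocks Φ P Pᵀ 0 *ᵥ (a - b) = 0 := by
    rw [Matrix.mulVec_sub, hab, sub_self]
  set x := a - b with hxdef
  suffices h : x = 0 by
    have := sub_eq_zero.mp (hxdef ▸ h)
    exact this
  have hx' : Matrix.fromBlocks Φ P Pᵀ 0 *ᵥ Sum.elim (x ∘ Sum.inl) (x ∘ Sum.inr) = 0 := by
    convert hx using 2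
    ext (i | i) <;> rfl
  rw [Matrix.fromBlocks_mulVec] at hx'
  set v := x ∘ Sum.inl
  set c := x ∘ Sum.inr
  have h1 : Φ *ᵥ v + P *ᵥ c = 0 := by
    have := congrArg (· ∘ Sum.inl) hx'; funext i; exact congrFun this i
  have h2 : Pᵀ *ᵥ v = 0 := by
    have := congrArg (· ∘ Sum.inr) hx'
    funext i
    simpa using congrFun this i
  have hv : v = 0 := by
    by_contra hv0
    have hpos := hΦ v hv0 h2
    have hdot : v ⬝ᵥ (Φ *ᵥ v + P *ᵥ c) = 0 := by rw [h1, dotProduct_zero]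
    rw [dotProduct_add] at hdot
    have : v ⬝ᵥ (P *ᵥ c) = 0 := by
      rw [Matrix.dotProduct_mulVec, ← Matrix.mulVec_transpose, h2, zero_dotProduct]
    linarith
  have hc : c = 0 := by
    apply hP
    have : P *ᵥ c = 0 := by simpa [hv] using h1
    simpa using this
  funext i
  cases i with
  | inl i => exact congrFun hv i
  | inr i => exact congrFun hc i
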